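/- Let c : ℝ → ℝ be differentiable and let u : ℝ × ℝ → ℝ be twice continuously differentiable on an open set Ω ⊆ ℝ² with c(u(t,x)) > 0 and u_tt(t,x) = c(u(t,x))² u_xx(t,x) for all (t,x) ∈ Ω. Then the Riemann variable S := u_t − c(u)u_x satisfies, at every point of Ω, S_t + c(u) S_x = (c'(u)/(2c(u))) · R · (S − R), where R := u_t + c(u)u_x. -/

import Mathlib

open Filter Topology

/-- Partial derivative in the first (time) variable. -/
noncomputable def pdt (u : ℝ × ℝ → ℝ) : ℝ × ℝ → ℝ :=
  fun p => deriv (fun s => u (s, p.2)) p.1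

/-- Partial derivative in the second (space) variable. -/
noncomputable def pdx (u : ℝ × ℝ → ℝ) : ℝ × ℝ → ℝ :=
  fun p => deriv (fun y => u (p.1, y)) p.2

/-- The Riemann variable `R = u_t + c(u) u_x`. -/
noncomputable def Rv (c : ℝ → ℝ) (u : ℝ × ℝ → ℝ) : ℝ × ℝ → ℝ :=
  fun p => pdt u p + c (u p) * pdx u p

/-- The Riemann variable `S = u_t - c(u) u_x`. -/
noncomputable def Sv (c : ℝ → ℝ) (u : ℝ × ℝ → ℝ) : ℝ × ℝ → ℝ :=
  fun p => pdt u p - c (u p) * pdx u p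

lemma pdt_eq_of_eventuallyEq {F G : ℝ × ℝ → ℝ} {L : ℝ × ℝ →L[ℝ] ℝ} {p : ℝ × ℝ}
    (h : F =ᶠ[nhds p] G) (hG : HasFDerivAt G L p) : pdt F p = L (1, 0) := by
  have hk : Filter.Tendsto (fun s : ℝ => ((s, p.2) : ℝ × ℝ)) (nhds p.1) (nhds p) := by
    have hcont : Continuous fun s : ℝ => ((s, p.2) : ℝ × ℝ) := by continuity
    simpa using hcont.tendsto p.1
  have he : (fun s => F (s, p.2)) =ᶠ[nhds p.1] fun s => G (s, p.2) := h.comp_tendsto hk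
  have hline : HasDerivAt (fun s : ℝ => ((s, p.2) : ℝ × ℝ)) ((1 : ℝ), (0 : ℝ)) p.1 :=
    (hasDerivAt_id p.1).prodMk (hasDerivAt_const _ _)
  have hG' : HasFDerivAt G L (p.1, p.2) := by simpa using hG
  have hd : HasDerivAt (fun s => G (s, p.2)) (L (1, 0)) p.1 :=
    hG'.comp_hasDerivAt p.1 hline
  rw [pdt, he.deriv_eq]
  exact hd.deriv

lemma pdx_eq_of_eventuallyEq {F G : ℝ × ℝ → ℝ} {L : ℝ × ℝ →L[ℝ] ℝ} {p : ℝ × ℝ}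
    (h : F =ᶠ[nhds p] G) (hG : HasFDerivAt G L p) : pdx F p = L (0, 1) := by
  have hk : Filter.Tendsto (fun y : ℝ => ((p.1, y) : ℝ × ℝ)) (nhds p.2) (nhds p) := by
    have hcont : Continuous fun y : ℝ => ((p.1, y) : ℝ × ℝ) := by continuity
    simpa using hcont.tendsto p.2
  have he : (fun y => F (p.1, y)) =ᶠ[nhds p.2] fun y => G (p.1, y) := h.comp_tendsto hk
  have hline : HasDerivAt (fun y : ℝ => ((p.1, y) : ℝ × ℝ)) ((0 : ℝ), (1 : ℝ)) p.2 :=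
    (hasDerivAt_const _ _).prodMk (hasDerivAt_id p.2)
  have hG' : HasFDerivAt G L (p.1, p.2) := by simpa using hG
  have hd : HasDerivAt (fun y => G (p.1, y)) (L (0, 1)) p.2 :=
    hG'.comp_hasDerivAt p.2 hline
  rw [pdx, he.deriv_eq]
  exact hd.deriv

theorem stmt1 (c : ℝ → ℝ) (u : ℝ × ℝ → ℝ) (Ω : Set (ℝ × ℝ))
    (hΩ : IsOpen Ω)
    (hc : Differentiable ℝ c)
    (hu : ContDiffOn ℝ 2 u Ω)
    (hpos : ∀ p ∈ Ω, 0 < c (u p))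
    (hwave : ∀ p ∈ Ω, pdt (pdt u) p = (c (u p)) ^ 2 * pdx (pdx u) p) :
    ∀ p ∈ Ω,
      pdt (Sv c u) p + c (u p) * pdx (Sv c u) p
        = (deriv c (u p) / (2 * c (u p))) * Rv c u p * (Sv c u p - Rv c u p) := by
  intro p hp
  have hmem : Ω ∈ nhds p := hΩ.mem_nhds hp
  set f := fderiv ℝ u with hf_def
  have hdiff : ∀ q ∈ Ω, HasFDerivAt u (f q) q := by
    intro q hq
    exact ((hu.contDiffAt (hΩ.mem_nhds hq)).differentiableAt two_ne_zero).hasFDerivAt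
  have hf1 : ContDiffAt ℝ 1 f p := (hu.contDiffAt hmem).fderiv_right (by norm_num)
  set H := fderiv ℝ f p with hH_def
  have hH : HasFDerivAt f H p := (hf1.differentiableAt one_ne_zero).hasFDerivAt
  have hev : ∀ᶠ q in nhds p, HasFDerivAt u (f q) q :=
    Filter.eventually_of_mem hmem hdiff
  have hsymm : ∀ v w, H v w = H w v := second_derivative_symmetric_of_eventually hev hH
  -- pointwise expressions for first partials on Ω
  have hpt : ∀ q ∈ Ω, pdt u q = f q (1, 0) := fun q hq =>
    pdt_eq_of_eventuallyEq (Filter.EventuallyEq.refl _ _) (hdiff q hq)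
  have hpx : ∀ q ∈ Ω, pdx u q = f q (0, 1) := fun q hq =>
    pdx_eq_of_eventuallyEq (Filter.EventuallyEq.refl _ _) (hdiff q hq)
  -- derivatives of q ↦ f q v
  have h10 : HasFDerivAt (fun q => f q (1, 0))
      ((ContinuousLinearMap.apply ℝ ℝ ((1 : ℝ), (0 : ℝ))).comp H) p :=
    (ContinuousLinearMap.apply ℝ ℝ ((1 : ℝ), (0 : ℝ))).hasFDerivAt.comp p hH
  have h01 : HasFDerivAt (fun q => f q (0, 1))
      ((ContinuousLinearMap.apply ℝ ℝ ((0 : ℝ), (1 : ℝ))).comp H) p :=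
    (ContinuousLinearMap.apply ℝ ℝ ((0 : ℝ), (1 : ℝ))).hasFDerivAt.comp p hH
  -- derivative of q ↦ c (u q)
  have hcu : HasFDerivAt (fun q => c (u q)) (deriv c (u p) • f p) p :=
    (hc (u p)).hasDerivAt.comp_hasFDerivAt p (hdiff p hp)
  -- derivative of the localized S
  have hSloc : HasFDerivAt (fun q => f q (1, 0) - c (u q) * f q (0, 1))
      ((ContinuousLinearMap.apply ℝ ℝ ((1 : ℝ), (0 : ℝ))).comp H -
        (c (u p) • ((ContinuousLinearMap.apply ℝ ℝ ((0 : ℝ), (1 : ℝ))).comp H) +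
          f p (0, 1) • (deriv c (u p) • f p))) p :=
    h10.sub (hcu.mul h01)
  have hSev : Sv c u =ᶠ[nhds p] fun q => f q (1, 0) - c (u q) * f q (0, 1) :=
    Filter.eventually_of_mem hmem fun q hq => by simp [Sv, hpt q hq, hpx q hq]
  have hptev : pdt u =ᶠ[nhds p] fun q => f q (1, 0) :=
    Filter.eventually_of_mem hmem fun q hq => hpt q hq
  have hpxev : pdx u =ᶠ[nhds p] fun q => f q (0, 1) :=
    Filter.eventually_of_mem hmem fun q hq => hpx q hq
  -- second partials at p
  have htt : pdt (pdt u) p = H (1, 0) (1, 0) := by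
    simpa using pdt_eq_of_eventuallyEq hptev h10
  have hxx : pdx (pdx u) p = H (0, 1) (0, 1) := by
    simpa using pdx_eq_of_eventuallyEq hpxev h01
  -- partials of Sv at p
  have hSt : pdt (Sv c u) p
      = H (1, 0) (1, 0) - (c (u p) * H (1, 0) (0, 1)
          + f p (0, 1) * (deriv c (u p) * f p (1, 0))) := by
    simpa [smul_eq_mul] using pdt_eq_of_eventuallyEq hSev hSloc
  have hSx : pdx (Sv c u) p
      = H (0, 1) (1, 0) - (c (u p) * H (0, 1) (0, 1)
          + f p (0, 1) * (deriv c (u p) * f p (0, 1))) := by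
    simpa [smul_eq_mul] using pdx_eq_of_eventuallyEq hSev hSloc
  have hwv : H (1, 0) (1, 0) = (c (u p)) ^ 2 * H (0, 1) (0, 1) := by
    rw [← htt, ← hxx]; exact hwave p hp
  have hSp : Sv c u p = f p (1, 0) - c (u p) * f p (0, 1) := by
    simp [Sv, hpt p hp, hpx p hp]
  have hRp : Rv c u p = f p (1, 0) + c (u p) * f p (0, 1) := by
    simp [Rv, hpt p hp, hpx p hp]
  have hcc : c (u p) ≠ 0 := ne_of_gt (hpos p hp)
  rw [hSt, hSx, hSp, hRp, hwv, hsymm (0,1) (1,0)]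
  field_simp
  ring
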